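/- arXiv:1612.04702 — 3 statements merged into one kernel-verified Lean document; each statement's English description precedes it below -/
import Mathlib

section
/- For every r ∈ ℕ, the sum-color cost of the star with r leaves satisfies s̊(K_{1,r}) = r + 1 + u_r. -/
variable {V : Type} [Fintype V] [DecidableEq V]

/-- The `k`-th triangular number `t_k = C(k+1,2)`. -/
def tri (k : ℕ) : ℕ := (k + 1).choose 2

/-- A natural number is triangular if it equals `t_k` for some `k`. -/
def IsTriangular (m : ℕ) : Prop := ∃ k, m = tri k

/-- `uval r = max {k : t_k ≤ r}`. -/
def uval (r : ℕ) : ℕ := Nat.findGreatest (fun k => tri k ≤ r) r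

open Classical in
/-- Sum-color cost (optimal total score of the slow-coloring game) of the subgraph
of `G` induced by `S`: it is `0` when there are no vertices, and otherwise the maximum
over nonempty marked sets `M ⊆ S` of `|M|` plus the minimum over nonempty independent
subsets `I ⊆ M` of the sum-color cost of the graph with `I` deleted. -/
noncomputable def scost (G : SimpleGraph V) (S : Finset V) : ℕ :=
  if S = ∅ then 0
  else
    (S.powerset.erase ∅).attach.sup fun M =>
      M.1.card +
      WithBot.unbotD 0
        ((((M.1.powerset.erase ∅).filter
              fun I => ∀ x ∈ I, ∀ y ∈ I, ¬ G.Adj x y).attach.image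
            fun I => scost G (S \ I.1)).min)
termination_by S.card
decreasing_by
  · have hI := I.2
    have hM := M.2
    simp only [Finset.mem_filter, Finset.mem_erase, Finset.mem_powerset] at hI hM
    have hsub : I.1 ⊆ S := hI.1.2.trans hM.2
    have hne : I.1.Nonempty := Finset.nonempty_iff_ne_empty.mpr hI.1.1
    exact Finset.card_lt_card (Finset.sdiff_ssubset hsub hne)

/-- The star `K_{1,r}` with one center (the vertex `0`) and `r` leaves. -/
def starGraph (r : ℕ) : SimpleGraph (Fin (r + 1)) :=
  SimpleGraph.fromRel (fun x _ => x = 0)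


-- ===== auxiliary lemmas =====

lemma tri_succ (k : ℕ) : tri (k+1) = tri k + (k+1) := by
  show (k+2).choose 2 = (k + 1).choose 2 + (k+1)
  rw [Nat.choose_succ_succ (k+1) 1, Nat.choose_one_right]
  show k+1+(k+1).choose 2 = (k+1).choose 2 + (k+1)
  omega

lemma self_le_tri (k : ℕ) : k ≤ tri k := by
  induction k with
  | zero => simp [tri]
  | succ n ih => rw [tri_succ]; omega

lemma tri_strictMono : StrictMono tri :=
  strictMono_nat_of_lt_succ fun n => by rw [tri_succ]; omega

lemma tri_uval_le (r : ℕ) : tri (uval r) ≤ r :=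
  Nat.findGreatest_spec (P := fun k => tri k ≤ r) (m := 0) (Nat.zero_le r) (by simp [tri])

lemma le_uval {k r : ℕ} (h : tri k ≤ r) : k ≤ uval r :=
  Nat.le_findGreatest ((self_le_tri k).trans h) h

lemma uval_mono : Monotone uval := fun a _ hab =>
  le_uval ((tri_uval_le a).trans hab)

lemma uval_lt_of_lt_tri {r k : ℕ} (h : r < tri k) : uval r < k := by
  by_contra hc
  exact absurd ((tri_strictMono.monotone (not_lt.mp hc)).trans (tri_uval_le r)) (by omega)

lemma lt_tri_uval_succ (r : ℕ) : r < tri (uval r + 1) := by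
  by_contra hc
  have := le_uval (not_lt.mp hc); omega

lemma unbot'_min_eq {s : Finset ℕ} (hne : s.Nonempty) :
    WithBot.unbotD 0 s.min = s.min' hne := by
  rw [← Finset.coe_min' hne]; rfl

lemma unbot'_min_le {s : Finset ℕ} {a : ℕ} (h : a ∈ s) : WithBot.unbotD 0 s.min ≤ a := by
  rw [unbot'_min_eq ⟨a, h⟩]; exact Finset.min'_le s a h

lemma scost_empty (G : SimpleGraph V) : scost G ∅ = 0 := by rw [scost]; simp

lemma scost_le {G : SimpleGraph V} {S : Finset V} {n : ℕ}
    (h : ∀ M : Finset V, M ≠ ∅ → M ⊆ S →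
      ∃ I : Finset V, I ≠ ∅ ∧ I ⊆ M ∧ (∀ x ∈ I, ∀ y ∈ I, ¬ G.Adj x y) ∧
        M.card + scost G (S \ I) ≤ n) :
    scost G S ≤ n := by
  classical
  rcases eq_or_ne S ∅ with rfl | hS
  · rw [scost_empty]; exact Nat.zero_le n
  · rw [scost, if_neg hS]
    apply Finset.sup_le
    rintro ⟨M, hM⟩ -
    simp only [Finset.mem_erase, Finset.mem_powerset] at hM
    obtain ⟨I, hIne, hIM, hind, hle⟩ := h M hM.1 hM.2
    have hImem : I ∈ (M.powerset.erase ∅).filter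
        (fun I => ∀ x ∈ I, ∀ y ∈ I, ¬ G.Adj x y) := by
      simp only [Finset.mem_filter, Finset.mem_erase, Finset.mem_powerset]
      exact ⟨⟨hIne, hIM⟩, hind⟩
    have hmem : scost G (S \ I) ∈
        (((M.powerset.erase ∅).filter
            (fun I => ∀ x ∈ I, ∀ y ∈ I, ¬ G.Adj x y)).attach.image
          fun I => scost G (S \ I.1)) :=
      Finset.mem_image.mpr ⟨⟨I, hImem⟩, Finset.mem_attach _ _, rfl⟩
    calc M.card + WithBot.unbotD 0 _ ≤ M.card + scost G (S \ I) :=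
          Nat.add_le_add_left (unbot'_min_le hmem) _
      _ ≤ n := hle

lemma le_scost {G : SimpleGraph V} {S : Finset V} {n : ℕ} (M : Finset V)
    (hMne : M ≠ ∅) (hMS : M ⊆ S)
    (h : ∀ I : Finset V, I ≠ ∅ → I ⊆ M → (∀ x ∈ I, ∀ y ∈ I, ¬ G.Adj x y) →
      n ≤ M.card + scost G (S \ I)) :
    n ≤ scost G S := by
  classical
  have hS : S ≠ ∅ := fun hh => hMne (Finset.subset_empty.mp (hh ▸ hMS))
  rw [scost, if_neg hS]
  have hMmem : M ∈ S.powerset.erase ∅ := by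
    simp only [Finset.mem_erase, Finset.mem_powerset]; exact ⟨hMne, hMS⟩
  refine le_trans ?_ (Finset.le_sup (b := ⟨M, hMmem⟩) (Finset.mem_attach _ _))
  obtain ⟨x, hx⟩ := Finset.nonempty_iff_ne_empty.mpr hMne
  have hsing : ({x} : Finset V) ∈ (M.powerset.erase ∅).filter
      (fun I => ∀ x ∈ I, ∀ y ∈ I, ¬ G.Adj x y) := by
    simp only [Finset.mem_filter, Finset.mem_erase, Finset.mem_powerset,
      Finset.mem_singleton]
    refine ⟨⟨Finset.singleton_ne_empty x, Finset.singleton_subset_iff.mpr hx⟩, ?_⟩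
    rintro a rfl b rfl
    exact G.loopless.irrefl _
  have hne : (((M.powerset.erase ∅).filter
      (fun I => ∀ x ∈ I, ∀ y ∈ I, ¬ G.Adj x y)).attach.image
      fun I => scost G (S \ I.1)).Nonempty :=
    ⟨_, Finset.mem_image.mpr ⟨⟨_, hsing⟩, Finset.mem_attach _ _, rfl⟩⟩
  rw [unbot'_min_eq hne]
  obtain ⟨⟨I, hI⟩, -, heq⟩ := Finset.mem_image.mp (Finset.min'_mem _ hne)
  rw [← heq]
  simp only [Finset.mem_filter, Finset.mem_erase, Finset.mem_powerset] at hI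
  exact h I hI.1.1 hI.1.2 hI.2

lemma star_adj (r : ℕ) (x y : Fin (r+1)) :
    (starGraph r).Adj x y ↔ x ≠ y ∧ (x = 0 ∨ y = 0) := by
  simp [starGraph, SimpleGraph.fromRel_adj]

lemma indep_of_zero_not_mem {r : ℕ} {I : Finset (Fin (r+1))} (h0 : (0:Fin (r+1)) ∉ I) :
    ∀ x ∈ I, ∀ y ∈ I, ¬ (starGraph r).Adj x y := by
  intro x hx y hy hadj
  rcases (star_adj r x y).mp hadj with ⟨-, rfl | rfl⟩
  · exact h0 hx
  · exact h0 hy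

lemma indep_singleton_zero (r : ℕ) :
    ∀ x ∈ ({0} : Finset (Fin (r+1))), ∀ y ∈ ({0} : Finset (Fin (r+1))),
      ¬ (starGraph r).Adj x y := by
  intro x hx y hy
  simp only [Finset.mem_singleton] at hx hy
  subst hx; subst hy
  exact (starGraph r).loopless.irrefl 0

lemma scost_no_center (r : ℕ) : ∀ (n : ℕ) (S : Finset (Fin (r+1))), S.card = n →
    (0 : Fin (r+1)) ∉ S → scost (starGraph r) S = S.card := by
  intro n
  induction n using Nat.strong_induction_on with
  | _ n ih =>
  intro S hcard h0
  rcases eq_or_ne S ∅ with rfl | hS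
  · simp [scost_empty]
  · refine le_antisymm (scost_le ?_) ?_
    · intro M hMne hMS
      refine ⟨M, hMne, subset_rfl, indep_of_zero_not_mem (fun h => h0 (hMS h)), ?_⟩
      have hlt : (S \ M).card < n := by
        rw [← hcard]
        exact Finset.card_lt_card
          (Finset.sdiff_ssubset hMS (Finset.nonempty_iff_ne_empty.mpr hMne))
      rw [ih _ hlt _ rfl (fun h => h0 (Finset.mem_sdiff.mp h).1), Finset.card_sdiff_of_subset hMS]
      have := Finset.card_le_card hMS
      omega
    · exact le_scost S hS subset_rfl (fun I _ _ _ => Nat.le_add_right _ _)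

lemma scost_center (r : ℕ) : ∀ (n : ℕ) (S : Finset (Fin (r+1))), S.card = n →
    (0 : Fin (r+1)) ∈ S → scost (starGraph r) S = S.card + uval (S.card - 1) := by
  intro n
  induction n using Nat.strong_induction_on with
  | _ n ih =>
  intro S hcard h0S
  have hn1 : 1 ≤ n := by
    rw [← hcard]; exact Finset.card_pos.mpr ⟨0, h0S⟩
  set j : ℕ := n - 1 with hj
  set u : ℕ := uval j with hu
  have hcard' : S.card = j + 1 := by omega
  have hSd : ((0:Fin (r+1)) ∉ S \ {0}) := by simp
  have hSdcard : (S \ {0}).card = j := by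
    rw [Finset.card_sdiff_of_subset (Finset.singleton_subset_iff.mpr h0S)]
    rw [Finset.card_singleton]; omega
  have hAj : scost (starGraph r) (S \ {0}) = j :=
    (scost_no_center r _ _ rfl hSd).trans hSdcard
  have huj : u ≤ j := le_trans (self_le_tri u) (tri_uval_le j)
  rw [hcard]
  show scost (starGraph r) S = n + uval j
  refine le_antisymm (scost_le ?_) ?_
  · -- upper bound
    intro M hMne hMS
    by_cases h0M : (0:Fin (r+1)) ∈ M
    · by_cases hb : M.card ≤ u + 1
      · -- Painter colors the center
        refine ⟨{0}, Finset.singleton_ne_empty _, Finset.singleton_subset_iff.mpr h0M,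
          indep_singleton_zero r, ?_⟩
        rw [hAj]; omega
      · -- Painter colors all marked leaves
        push_neg at hb
        refine ⟨M.erase 0, ?_, Finset.erase_subset _ _,
          indep_of_zero_not_mem (Finset.notMem_erase _ _), ?_⟩
        · have hc : (M.erase 0).card = M.card - 1 := Finset.card_erase_of_mem h0M
          have : 0 < (M.erase 0).card := by omega
          exact (Finset.card_pos.mp this).ne_empty
        · have hc : (M.erase 0).card = M.card - 1 := Finset.card_erase_of_mem h0M
          have hIS : M.erase 0 ⊆ S := (Finset.erase_subset _ _).trans hMS
          have hne : (M.erase 0).Nonempty := Finset.card_pos.mp (by omega)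
          have hlt : (S \ M.erase 0).card < n := by
            rw [← hcard]; exact Finset.card_lt_card (Finset.sdiff_ssubset hIS hne)
          have h0SI : (0:Fin (r+1)) ∈ S \ M.erase 0 :=
            Finset.mem_sdiff.mpr ⟨h0S, Finset.notMem_erase _ _⟩
          rw [ih _ hlt _ rfl h0SI]
          have hcardSI : (S \ M.erase 0).card = S.card - (M.card - 1) := by
            rw [Finset.card_sdiff_of_subset hIS, hc]
          -- b := M.card - 1 ≤ j
          have hbM : M.erase 0 ⊆ S \ {0} := by
            intro x hx
            exact Finset.mem_sdiff.mpr ⟨hMS (Finset.mem_of_mem_erase hx),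
              by simpa using (Finset.ne_of_mem_erase hx)⟩
          have hble : M.card - 1 ≤ j := by
            have := Finset.card_le_card hbM
            rw [hc, hSdcard] at this; exact this
          -- key inequality
          have hkey : uval (j - (M.card - 1)) < u := by
            apply uval_lt_of_lt_tri
            have h1 := lt_tri_uval_succ j
            rw [tri_succ u] at h1
            omega
          rw [hcardSI, hcard']
          have hM1 : 1 ≤ M.card := Finset.card_pos.mpr ⟨0, h0M⟩
          have : j + 1 - (M.card - 1) - 1 = j - (M.card - 1) := by omega
          rw [this]
          omega
    · -- Painter colors all of M (all leaves)
      refine ⟨M, hMne, subset_rfl, indep_of_zero_not_mem h0M, ?_⟩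
      have hMne' : M.Nonempty := Finset.nonempty_iff_ne_empty.mpr hMne
      have hlt : (S \ M).card < n := by
        rw [← hcard]; exact Finset.card_lt_card (Finset.sdiff_ssubset hMS hMne')
      have h0SI : (0:Fin (r+1)) ∈ S \ M := Finset.mem_sdiff.mpr ⟨h0S, h0M⟩
      rw [ih _ hlt _ rfl h0SI]
      have hMsub : M ⊆ S \ {0} := by
        intro x hx
        refine Finset.mem_sdiff.mpr ⟨hMS hx, ?_⟩
        simp only [Finset.mem_singleton]
        rintro rfl; exact h0M hx
      have hmj : M.card ≤ j := by
        have := Finset.card_le_card hMsub; rwa [hSdcard] at this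
      have hm1 : 1 ≤ M.card := Finset.card_pos.mpr hMne'
      have hcardSM : (S \ M).card = j + 1 - M.card := by
        rw [Finset.card_sdiff_of_subset hMS, hcard']
      have hmono : uval (j + 1 - M.card - 1) ≤ u := uval_mono (by omega)
      rw [hcardSM]
      omega
  · -- lower bound
    obtain ⟨T, hTsub, hTcard⟩ :=
      Finset.exists_subset_card_eq (show u ≤ (S \ {0}).card by rw [hSdcard]; exact huj)
    have h0T : (0:Fin (r+1)) ∉ T := fun h => (Finset.mem_sdiff.mp (hTsub h)).2 (by simp)
    have hMcard : (insert (0:Fin (r+1)) T).card = u + 1 := by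
      rw [Finset.card_insert_of_notMem h0T, hTcard]
    have hMS : insert (0:Fin (r+1)) T ⊆ S :=
      Finset.insert_subset h0S (hTsub.trans (Finset.sdiff_subset))
    refine le_scost (insert 0 T) (Finset.insert_ne_empty _ _) hMS ?_
    intro I hIne hIM hind
    rw [hMcard]
    by_cases h0I : (0:Fin (r+1)) ∈ I
    · have hIeq : I = {0} := by
        apply Finset.eq_singleton_iff_unique_mem.mpr
        refine ⟨h0I, fun x hx => ?_⟩
        by_contra hx0
        exact hind 0 h0I x hx ((star_adj r 0 x).mpr ⟨fun he => hx0 he.symm, Or.inl rfl⟩)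
      rw [hIeq, hAj]
      omega
    · have hIT : I ⊆ T := fun x hx =>
        (Finset.mem_insert.mp (hIM hx)).resolve_left (fun he => h0I (he ▸ hx))
      have hIne' : I.Nonempty := Finset.nonempty_iff_ne_empty.mpr hIne
      have hi1 : 1 ≤ I.card := Finset.card_pos.mpr hIne'
      have hiu : I.card ≤ u := (Finset.card_le_card hIT).trans_eq hTcard
      have hIS : I ⊆ S := hIM.trans hMS
      have h0SI : (0:Fin (r+1)) ∈ S \ I := Finset.mem_sdiff.mpr ⟨h0S, h0I⟩
      have hlt : (S \ I).card < n := by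
        rw [← hcard]; exact Finset.card_lt_card (Finset.sdiff_ssubset hIS hIne')
      rw [ih _ hlt _ rfl h0SI]
      have hcardSI : (S \ I).card = j + 1 - I.card := by
        rw [Finset.card_sdiff_of_subset hIS, hcard']
      have hkey : I.card - 1 ≤ uval (j - I.card) := by
        apply le_uval
        have h1 : tri ((I.card - 1) + 1) = tri (I.card - 1) + ((I.card - 1) + 1) :=
          tri_succ _
        have h4 : (I.card - 1) + 1 = I.card := by omega
        rw [h4] at h1
        have h2 : tri I.card ≤ tri u := tri_strictMono.monotone hiu
        have h3 : tri u ≤ j := tri_uval_le j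
        omega
      rw [hcardSI]
      have : j + 1 - I.card - 1 = j - I.card := by omega
      rw [this]
      omega

/-- The sum-color cost of the star with `r` leaves is `r + 1 + u_r`. -/
theorem stmt4 (r : ℕ) : scost (starGraph r) Finset.univ = r + 1 + uval r := by
  have h := scost_center r (Finset.univ : Finset (Fin (r+1))).card Finset.univ rfl
    (Finset.mem_univ 0)
  rw [h]
  rw [Finset.card_univ, Fintype.card_fin]
  simp
end

section
/- If G is a graph and (A, B) is a bipartition of V(G), then χ_ISC(G[A]) + χ_ISC(G[B]) ≤ χ_ISC(G) ≤ χ_ISC(G[A]) + χ_ISC(G[B]) + |[A,B]|, where G[S] denotes the subgraph of G induced by S and [A,B] denotes the set of edges of G with one endpoint in A and one endpoint in B. -/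
variable {V : Type} [Fintype V] [DecidableEq V]

/-- The lists `L` admit a proper coloring of the subgraph of `G` induced by `S`,
with each vertex of `S` colored from its list. -/
def ColorableOn (G : SimpleGraph V) (S : Finset V) (L : V → Finset ℕ) : Prop :=
  ∃ φ : V → ℕ, (∀ v ∈ S, φ v ∈ L v) ∧ ∀ x ∈ S, ∀ y ∈ S, G.Adj x y → φ x ≠ φ y

/-- In the interactive sum choice game on the subgraph of `G` induced by `S`, starting
from lists `L`, Requester can force the game to end within `n` further rounds: either the
current lists already admit a proper coloring, or Requester can request a new color at
some vertex `v ∈ S` so that, whatever color `c ∉ L v` Supplier adds to `L v`, Requester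
can finish within `n - 1` further rounds. -/
def ReqWins (G : SimpleGraph V) (S : Finset V) : (V → Finset ℕ) → ℕ → Prop
  | L, 0 => ColorableOn G S L
  | L, n + 1 => ColorableOn G S L ∨
      ∃ v ∈ S, ∀ c ∉ L v, ReqWins G S (Function.update L v (insert c (L v))) n

/-- The interactive sum choice number of the subgraph of `G` induced by `S`:
the optimal number of rounds of the interactive sum choice game, namely the least `n`
such that Requester can force the game, started from empty lists, to end within `n`
rounds. -/
noncomputable def isc (G : SimpleGraph V) (S : Finset V) : ℕ :=
  sInf {n | ReqWins G S (fun _ => ∅) n}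

set_option linter.unusedSectionVars false
open scoped Classical

section Aux

/-- A generalized game: like `ReqWins` but with an arbitrary target predicate `P`. -/
def ReqWinsP (G : SimpleGraph V) (S : Finset V) (P : (V → Finset ℕ) → Prop) :
    (V → Finset ℕ) → ℕ → Prop
  | L, 0 => P L
  | L, n + 1 => P L ∨
      ∃ v ∈ S, ∀ c ∉ L v, ReqWinsP G S P (Function.update L v (insert c (L v))) n

variable {G : SimpleGraph V} {S T A B : Finset V} {P Q : (V → Finset ℕ) → Prop}
  {L L' : V → Finset ℕ} {n m : ℕ}

lemma exists_notmem (s : Finset ℕ) : ∃ c, c ∉ s := Infinite.exists_notMem_finset s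

lemma reqWins_zero : ReqWins G S L 0 ↔ ColorableOn G S L := Iff.rfl

lemma reqWins_succ_iff : ReqWins G S L (n+1) ↔ ColorableOn G S L ∨
    ∃ v ∈ S, ∀ c ∉ L v, ReqWins G S (Function.update L v (insert c (L v))) n := Iff.rfl

lemma reqWinsP_zero : ReqWinsP G S P L 0 ↔ P L := Iff.rfl

lemma reqWinsP_succ_iff : ReqWinsP G S P L (n+1) ↔ P L ∨
    ∃ v ∈ S, ∀ c ∉ L v, ReqWinsP G S P (Function.update L v (insert c (L v))) n := Iff.rfl

lemma update_subset (L : V → Finset ℕ) (v : V) (c : ℕ) (w : V) :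
    L w ⊆ Function.update L v (insert c (L v)) w := by
  by_cases hw : w = v
  · subst hw; simp only [Function.update_self]; exact Finset.subset_insert _ _
  · rw [Function.update_of_ne hw]

lemma reqWinsP_of_target (h : P L) : ReqWinsP G S P L n := by
  cases n with
  | zero => exact h
  | succ n => exact Or.inl h

lemma reqWinsP_succ (h : ReqWinsP G S P L n) : ReqWinsP G S P L (n+1) := by
  induction n generalizing L with
  | zero => exact Or.inl h
  | succ n ih =>
    rcases h with h | ⟨v, hv, hc⟩
    · exact Or.inl h
    · exact Or.inr ⟨v, hv, fun c hcv => ih (hc c hcv)⟩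

lemma reqWinsP_mono (h : ReqWinsP G S P L n) (hnm : n ≤ m) : ReqWinsP G S P L m := by
  induction m, hnm using Nat.le_induction with
  | base => exact h
  | succ m hm ih => exact reqWinsP_succ ih

lemma reqWins_eq_reqWinsP : ReqWins G S L n ↔ ReqWinsP G S (ColorableOn G S) L n := by
  induction n generalizing L with
  | zero => exact Iff.rfl
  | succ n ih =>
    rw [reqWins_succ_iff, reqWinsP_succ_iff]
    constructor <;> rintro (h | ⟨v, hv, hc⟩)
    · exact Or.inl h
    · exact Or.inr ⟨v, hv, fun c hcv => ih.mp (hc c hcv)⟩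
    · exact Or.inl h
    · exact Or.inr ⟨v, hv, fun c hcv => ih.mpr (hc c hcv)⟩

lemma reqWins_succ (h : ReqWins G S L n) : ReqWins G S L (n+1) :=
  reqWins_eq_reqWinsP.mpr (reqWinsP_succ (reqWins_eq_reqWinsP.mp h))

lemma reqWins_mono (h : ReqWins G S L n) (hnm : n ≤ m) : ReqWins G S L m :=
  reqWins_eq_reqWinsP.mpr (reqWinsP_mono (reqWins_eq_reqWinsP.mp h) hnm)

lemma reqWinsP_S_mono (hST : S ⊆ T) (h : ReqWinsP G S P L n) : ReqWinsP G T P L n := by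
  induction n generalizing L with
  | zero => exact h
  | succ n ih =>
    rcases h with h | ⟨v, hv, hc⟩
    · exact Or.inl h
    · exact Or.inr ⟨v, hST hv, fun c hcv => ih (hc c hcv)⟩

/-- Weakening the target, taking into account that reachable lists extend the current one. -/
lemma reqWinsP_impl (h : ReqWinsP G S P L n)
    (hPQ : ∀ L', (∀ v, L v ⊆ L' v) → P L' → Q L') : ReqWinsP G S Q L n := by
  induction n generalizing L with
  | zero => exact hPQ L (fun _ => le_rfl) h
  | succ n ih =>
    rcases h with h | ⟨v, hv, hc⟩
    · exact Or.inl (hPQ L (fun _ => le_rfl) h)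
    · refine Or.inr ⟨v, hv, fun c hcv => ih (hc c hcv) ?_⟩
      intro L' hL' hP
      exact hPQ L' (fun w => (update_subset L v c w).trans (hL' w)) hP

/-- Sequencing of strategies. -/
lemma reqWinsP_seq (h : ReqWinsP G S P L n)
    (hc : ∀ L', P L' → ReqWinsP G S Q L' m) : ReqWinsP G S Q L (n + m) := by
  induction n generalizing L with
  | zero => simpa using hc L h
  | succ n ih =>
    have hadd : n + 1 + m = (n + m) + 1 := by omega
    rcases h with h | ⟨v, hv, hk⟩
    · exact reqWinsP_mono (hc L h) (by omega)
    · rw [hadd]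
      exact Or.inr ⟨v, hv, fun c hcv => ih (hk c hcv)⟩

lemma colorableOn_mono_list (hL : ∀ v ∈ S, L v ⊆ L' v) (h : ColorableOn G S L) :
    ColorableOn G S L' := by
  obtain ⟨φ, h1, h2⟩ := h
  exact ⟨φ, fun v hv => hL v hv (h1 v hv), h2⟩

lemma colorableOn_subset (hS : T ⊆ S) (h : ColorableOn G S L) : ColorableOn G T L := by
  obtain ⟨φ, h1, h2⟩ := h
  exact ⟨φ, fun v hv => h1 v (hS hv), fun x hx y hy => h2 x (hS hx) y (hS hy)⟩

lemma reqWins_mono_list (hL : ∀ v, L v ⊆ L' v) (h : ReqWins G S L n) : ReqWins G S L' n := by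
  induction n generalizing L L' with
  | zero => exact colorableOn_mono_list (fun v _ => hL v) h
  | succ n ih =>
    rcases h with h | ⟨v, hv, hk⟩
    · exact Or.inl (colorableOn_mono_list (fun v _ => hL v) h)
    · refine Or.inr ⟨v, hv, fun c hcv => ?_⟩
      refine ih ?_ (hk c (fun hm => hcv (hL v hm)))
      intro w
      by_cases hw : w = v
      · subst hw; simp only [Function.update_self]
        exact Finset.insert_subset_insert _ (hL w)
      · simp only [Function.update_of_ne hw]; exact hL w

lemma reqWins_congr (hL : ∀ v ∈ S, L v = L' v) (h : ReqWins G S L n) : ReqWins G S L' n := by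
  induction n generalizing L L' with
  | zero =>
    obtain ⟨φ, h1, h2⟩ := h
    exact ⟨φ, fun v hv => (hL v hv) ▸ h1 v hv, h2⟩
  | succ n ih =>
    rcases h with h | ⟨v, hv, hk⟩
    · obtain ⟨φ, h1, h2⟩ := h
      exact Or.inl ⟨φ, fun w hw => (hL w hw) ▸ h1 w hw, h2⟩
    · refine Or.inr ⟨v, hv, fun c hcv => ?_⟩
      refine ih ?_ (hk c ((hL v hv) ▸ hcv))
      intro w hw
      by_cases hwv : w = v
      · subst hwv; simp only [Function.update_self, hL w hw]
      · simp only [Function.update_of_ne hwv]; exact hL w hw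

lemma reqWins_restrict (hS : T ⊆ S) (h : ReqWins G S L n) : ReqWins G T L n := by
  induction n generalizing L with
  | zero => exact colorableOn_subset hS h
  | succ n ih =>
    rcases h with h | ⟨v, hv, hk⟩
    · exact Or.inl (colorableOn_subset hS h)
    · by_cases hvT : v ∈ T
      · exact Or.inr ⟨v, hvT, fun c hcv => ih (hk c hcv)⟩
      · obtain ⟨c, hc⟩ := exists_notmem (L v)
        have h1 : ReqWins G T (Function.update L v (insert c (L v))) n := ih (hk c hc)
        have h2 : ReqWins G T L n := by
          refine reqWins_congr (L := Function.update L v (insert c (L v))) ?_ h1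
          intro w hw
          have hwv : w ≠ v := fun he => hvT (he ▸ hw)
          simp [Function.update_of_ne hwv]
        exact reqWins_succ h2

lemma reqWins_toP (hST : S ⊆ T) (h : ReqWins G S L n) :
    ReqWinsP G T (ColorableOn G S) L n :=
  reqWinsP_S_mono hST (reqWins_eq_reqWinsP.mp h)

/-- Greedy list coloring: if all lists on `S` have at least `|S|` colors, `S` is colorable. -/
lemma colorableOn_of_big (G : SimpleGraph V) :
    ∀ (S : Finset V) (L : V → Finset ℕ), (∀ v ∈ S, S.card ≤ (L v).card) → ColorableOn G S L := by
  intro S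
  induction S using Finset.induction_on with
  | empty =>
    intro L _
    exact ⟨fun _ => 0, fun v hv => absurd hv (by simp), fun x hx => absurd hx (by simp)⟩
  | @insert a s ha ih =>
    intro L hcard
    obtain ⟨φ, h1, h2⟩ := ih L (fun v hv => by
      have := hcard v (Finset.mem_insert_of_mem hv)
      rw [Finset.card_insert_of_notMem ha] at this; omega)
    have hlt : (s.image φ).card < (L a).card := by
      have h3 := hcard a (Finset.mem_insert_self a s)
      rw [Finset.card_insert_of_notMem ha] at h3
      have h4 := Finset.card_image_le (s := s) (f := φ)
      omega
    have hne : ((L a) \ s.image φ).Nonempty := by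
      by_contra hcon
      rw [Finset.not_nonempty_iff_eq_empty, Finset.sdiff_eq_empty_iff_subset] at hcon
      exact absurd (Finset.card_le_card hcon) (by omega)
    obtain ⟨c, hcmem⟩ := hne
    rw [Finset.mem_sdiff] at hcmem
    refine ⟨Function.update φ a c, ?_, ?_⟩
    · intro v hv
      rcases Finset.mem_insert.mp hv with rfl | hv
      · simp only [Function.update_self]; exact hcmem.1
      · have hva : v ≠ a := fun he => ha (he ▸ hv)
        rw [Function.update_of_ne hva]; exact h1 v hv
    · intro x hx y hy hadj
      rcases Finset.mem_insert.mp hx with hxa | hxs <;>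
        rcases Finset.mem_insert.mp hy with hya | hys
      · rw [hxa, hya] at hadj
        exact absurd hadj (G.loopless.irrefl a)
      · have hya' : y ≠ a := fun he => ha (he ▸ hys)
        rw [hxa, Function.update_self, Function.update_of_ne hya']
        exact fun he => hcmem.2 (he ▸ Finset.mem_image_of_mem φ hys)
      · have hxa' : x ≠ a := fun he => ha (he ▸ hxs)
        rw [hya, Function.update_of_ne hxa', Function.update_self]
        exact fun he => hcmem.2 (he.symm ▸ Finset.mem_image_of_mem φ hxs)
      · have hxa' : x ≠ a := fun he => ha (he ▸ hxs)
        have hya' : y ≠ a := fun he => ha (he ▸ hys)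
        rw [Function.update_of_ne hxa', Function.update_of_ne hya']
        exact h2 x hxs y hys hadj

/-- Requester can always win: the game terminates within a bounded number of rounds. -/
lemma reqWins_total (G : SimpleGraph V) (S : Finset V) :
    ∀ (N : ℕ) (L : V → Finset ℕ), (∑ v ∈ S, (S.card - (L v).card)) ≤ N → ReqWins G S L N := by
  intro N
  induction N with
  | zero =>
    intro L h
    rw [Nat.le_zero, Finset.sum_eq_zero_iff] at h
    exact colorableOn_of_big G S L (fun v hv => by have := h v hv; omega)
  | succ M ih =>
    intro L h
    by_cases hall : ∀ v ∈ S, S.card ≤ (L v).card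
    · exact Or.inl (colorableOn_of_big G S L hall)
    · push_neg at hall
      obtain ⟨v, hvS, hvlt⟩ := hall
      refine Or.inr ⟨v, hvS, fun c hcv => ih _ ?_⟩
      have hsplit : (S.card - (L v).card) + ∑ w ∈ S.erase v, (S.card - (L w).card)
          = ∑ w ∈ S, (S.card - (L w).card) :=
        Finset.add_sum_erase S (fun w => S.card - (L w).card) hvS
      have hsplit2 : (S.card - (Function.update L v (insert c (L v)) v).card)
          + ∑ w ∈ S.erase v, (S.card - (Function.update L v (insert c (L v)) w).card)
          = ∑ w ∈ S, (S.card - (Function.update L v (insert c (L v)) w).card) :=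
        Finset.add_sum_erase S
          (fun w => S.card - ((Function.update L v (insert c (L v)) w)).card) hvS
      have herase : ∑ w ∈ S.erase v, (S.card - ((Function.update L v (insert c (L v)) w)).card)
          = ∑ w ∈ S.erase v, (S.card - (L w).card) := by
        refine Finset.sum_congr rfl (fun w hw => ?_)
        rw [Function.update_of_ne (Finset.ne_of_mem_erase hw)]
      have hvcard : (Function.update L v (insert c (L v)) v).card = (L v).card + 1 := by
        rw [Function.update_self, Finset.card_insert_of_notMem hcv]
      rw [← hsplit2, herase, hvcard]
      rw [← hsplit] at h
      omega

lemma reqWins_nonempty (G : SimpleGraph V) (S : Finset V) (L : V → Finset ℕ) :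
    {n | ReqWins G S L n}.Nonempty :=
  ⟨_, reqWins_total G S _ L le_rfl⟩

/-- The simulation lemma: playing the game with virtual lists `L v \ F v`, Requester can
reach lists whose `F`-avoiding parts admit a proper coloring, wasting at most one round
per color of `F v` not yet in `L v`. -/
lemma reqWins_sim (G : SimpleGraph V) (S : Finset V) (F : V → Finset ℕ) :
    ∀ (N n : ℕ) (L : V → Finset ℕ), ReqWins G S (fun v => L v \ F v) n →
      n + (∑ v ∈ S, (F v \ L v).card) ≤ N →
      ReqWinsP G S (fun L' => ColorableOn G S (fun v => L' v \ F v)) L N := by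
  intro N
  induction N with
  | zero =>
    intro n L h hle
    obtain rfl : n = 0 := by omega
    exact h
  | succ M ih =>
    intro n L h hle
    cases n with
    | zero => exact Or.inl h
    | succ k =>
      rcases h with hcol | ⟨v, hvS, hstep⟩
      · exact Or.inl hcol
      · refine Or.inr ⟨v, hvS, fun c hcv => ?_⟩
        by_cases hcF : c ∈ F v
        · -- wasted move: virtual lists unchanged, potential decreases
          have heq : (fun w => Function.update L v (insert c (L v)) w \ F w)
              = (fun w => L w \ F w) := by
            funext w
            by_cases hw : w = v
            · subst hw
              rw [Function.update_self]
              ext d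
              simp only [Finset.mem_sdiff, Finset.mem_insert]
              constructor
              · rintro ⟨(rfl | h1), h2⟩
                · exact absurd hcF h2
                · exact ⟨h1, h2⟩
              · rintro ⟨h1, h2⟩; exact ⟨Or.inr h1, h2⟩
            · rw [Function.update_of_ne hw]
          have h' : ReqWins G S (fun w => Function.update L v (insert c (L v)) w \ F w)
              (k+1) := by rw [heq]; exact Or.elim (Or.inr ⟨v, hvS, hstep⟩) Or.inl Or.inr
          refine ih (k+1) _ h' ?_
          have hsd : F v \ Function.update L v (insert c (L v)) v = (F v \ L v).erase c := by
            rw [Function.update_self]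
            ext d
            simp only [Finset.mem_sdiff, Finset.mem_insert, Finset.mem_erase, not_or]
            tauto
          have hcmem : c ∈ F v \ L v := Finset.mem_sdiff.mpr ⟨hcF, hcv⟩
          have hsplit : (F v \ L v).card + ∑ w ∈ S.erase v, (F w \ L w).card
              = ∑ w ∈ S, (F w \ L w).card :=
            Finset.add_sum_erase S (fun w => (F w \ L w).card) hvS
          have hsplit2 : (F v \ Function.update L v (insert c (L v)) v).card
              + ∑ w ∈ S.erase v, (F w \ Function.update L v (insert c (L v)) w).card
              = ∑ w ∈ S, (F w \ Function.update L v (insert c (L v)) w).card :=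
            Finset.add_sum_erase S
              (fun w => (F w \ Function.update L v (insert c (L v)) w).card) hvS
          have herase : ∑ w ∈ S.erase v, (F w \ Function.update L v (insert c (L v)) w).card
              = ∑ w ∈ S.erase v, (F w \ L w).card := by
            refine Finset.sum_congr rfl (fun w hw => ?_)
            rw [Function.update_of_ne (Finset.ne_of_mem_erase hw)]
          have hvcard : ((F v \ L v).erase c).card = (F v \ L v).card - 1 :=
            Finset.card_erase_of_mem hcmem
          have hpos : 1 ≤ (F v \ L v).card := Finset.card_pos.mpr ⟨c, hcmem⟩
          rw [← hsplit2, herase, hsd, hvcard]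
          rw [← hsplit] at hle
          omega
        · -- real progress in the virtual game
          have hcv' : c ∉ L v \ F v := fun hm => hcv (Finset.mem_sdiff.mp hm).1
          have h' := hstep c hcv'
          have heq : (Function.update (fun w => L w \ F w) v (insert c (L v \ F v)))
              = (fun w => Function.update L v (insert c (L v)) w \ F w) := by
            funext w
            by_cases hw : w = v
            · subst hw
              rw [Function.update_self, Function.update_self]
              ext d
              simp only [Finset.mem_insert, Finset.mem_sdiff]
              constructor
              · rintro (rfl | ⟨h1, h2⟩)
                · exact ⟨Or.inl rfl, hcF⟩
                · exact ⟨Or.inr h1, h2⟩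
              · rintro ⟨(rfl | h1), h2⟩
                · exact Or.inl rfl
                · exact Or.inr ⟨h1, h2⟩
            · rw [Function.update_of_ne hw, Function.update_of_ne hw]
          rw [heq] at h'
          refine ih k _ h' ?_
          have hsum : ∑ w ∈ S, (F w \ Function.update L v (insert c (L v)) w).card
              = ∑ w ∈ S, (F w \ L w).card := by
            refine Finset.sum_congr rfl (fun w hw => ?_)
            by_cases hwv : w = v
            · subst hwv
              rw [Function.update_self]
              congr 1
              ext d
              simp only [Finset.mem_sdiff, Finset.mem_insert, not_or]
              constructor
              · rintro ⟨h1, h2, h3⟩; exact ⟨h1, h3⟩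
              · rintro ⟨h1, h2⟩
                exact ⟨h1, fun he => (he ▸ hcF) h1, h2⟩
            · rw [Function.update_of_ne hwv]
          rw [hsum]
          omega

end Aux

section Lower

variable {G : SimpleGraph V} {A B : Finset V}

lemma lower_main (G : SimpleGraph V) (A B : Finset V)
    (hunion : A ∪ B = Finset.univ) (hdisj : Disjoint A B) :
    ∀ (n : ℕ) (L : V → Finset ℕ), ReqWins G Finset.univ L n →
      sInf {m | ReqWins G A L m} + sInf {m | ReqWins G B L m} ≤ n := by
  have key : ∀ (A B : Finset V), Disjoint A B → ∀ (n : ℕ) (L : V → Finset ℕ) (v : V),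
      v ∈ A → (∀ c ∉ L v, ReqWins G Finset.univ (Function.update L v (insert c (L v))) n) →
      (∀ (L' : V → Finset ℕ), ReqWins G Finset.univ L' n →
        sInf {m | ReqWins G A L' m} + sInf {m | ReqWins G B L' m} ≤ n) →
      sInf {m | ReqWins G A L m} + sInf {m | ReqWins G B L m} ≤ n + 1 := by
    intro A B hd n L v hvA hv IH
    -- updated lists agree with L on B
    have hagree : ∀ c, ∀ w ∈ B, Function.update L v (insert c (L v)) w = L w := by
      intro c w hw
      have hwv : w ≠ v := fun he => (Finset.disjoint_left.mp hd) hvA (he ▸ hw)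
      rw [Function.update_of_ne hwv]
    have hBeq : ∀ c, {m | ReqWins G B (Function.update L v (insert c (L v))) m}
        = {m | ReqWins G B L m} := by
      intro c
      ext m
      constructor
      · exact fun h => reqWins_congr (fun w hw => hagree c w hw) h
      · exact fun h => reqWins_congr (fun w hw => (hagree c w hw).symm) h
    obtain ⟨c₀, hc₀⟩ := exists_notmem (L v)
    set β := sInf {m | ReqWins G B L m} with hβ
    have hIH0 := IH _ (hv c₀ hc₀)
    rw [hBeq c₀] at hIH0
    have hβn : β ≤ n := by omega
    -- Requester wins the A-game from L in n + 1 - β rounds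
    have hA : ReqWins G A L (n - β + 1) := by
      refine Or.inr ⟨v, hvA, fun c hcv => ?_⟩
      have hIHc := IH _ (hv c hcv)
      rw [hBeq c] at hIHc
      have hAne : {m | ReqWins G A (Function.update L v (insert c (L v))) m}.Nonempty :=
        ⟨n, reqWins_restrict (Finset.subset_univ A) (hv c hcv)⟩
      have hmem := Nat.sInf_mem hAne
      exact reqWins_mono hmem (by omega)
    have hle : sInf {m | ReqWins G A L m} ≤ n - β + 1 := Nat.sInf_le hA
    omega
  intro n
  induction n with
  | zero =>
    intro L h
    have hA : ReqWins G A L 0 := reqWins_restrict (Finset.subset_univ A) h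
    have hB : ReqWins G B L 0 := reqWins_restrict (Finset.subset_univ B) h
    have h1 : sInf {m | ReqWins G A L m} ≤ 0 := Nat.sInf_le hA
    have h2 : sInf {m | ReqWins G B L m} ≤ 0 := Nat.sInf_le hB
    omega
  | succ n ih =>
    intro L h
    rcases h with hcol | ⟨v, _, hv⟩
    · have h1 : sInf {m | ReqWins G A L m} ≤ 0 :=
        Nat.sInf_le (colorableOn_subset (Finset.subset_univ A) hcol)
      have h2 : sInf {m | ReqWins G B L m} ≤ 0 :=
        Nat.sInf_le (colorableOn_subset (Finset.subset_univ B) hcol)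
      omega
    · have hvAB : v ∈ A ∪ B := hunion ▸ Finset.mem_univ v
      rcases Finset.mem_union.mp hvAB with hvA | hvB
      · exact key A B hdisj n L v hvA hv ih
      · have := key B A hdisj.symm n L v hvB hv
          (fun L' hL' => by rw [add_comm]; exact ih L' hL')
        omega

end Lower

section Upper

variable {G : SimpleGraph V}

lemma upper_main (G : SimpleGraph V) (A B : Finset V)
    (hunion : A ∪ B = Finset.univ) (hdisj : Disjoint A B) :
    ReqWins G Finset.univ (fun _ => ∅)
      (isc G A + (isc G B + ((A ×ˢ B).filter fun p => G.Adj p.1 p.2).card)) := by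
  set K := ((A ×ˢ B).filter fun p => G.Adj p.1 p.2).card with hK
  have h1 : ReqWins G A (fun _ => ∅) (isc G A) := Nat.sInf_mem (reqWins_nonempty G A _)
  have h1' : ReqWinsP G Finset.univ (ColorableOn G A) (fun _ => ∅) (isc G A) :=
    reqWins_toP (Finset.subset_univ A) h1
  rw [reqWins_eq_reqWinsP]
  refine reqWinsP_seq h1' ?_
  intro L' hcolA
  obtain ⟨φA, hφA1, hφA2⟩ := hcolA
  set F : V → Finset ℕ := fun y => (A.filter fun u => G.Adj u y).image φA with hF
  -- the B-game on the virtual lists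
  have h2 : ReqWins G B (fun v => L' v \ F v) (isc G B) :=
    reqWins_mono_list (fun v => Finset.empty_subset _) (Nat.sInf_mem (reqWins_nonempty G B _))
  have hsum : (∑ v ∈ B, (F v \ L' v).card) ≤ K := by
    have hstep1 : ∀ v ∈ B, (F v \ L' v).card ≤ (A.filter fun u => G.Adj u v).card := by
      intro v _
      calc (F v \ L' v).card ≤ (F v).card := Finset.card_le_card Finset.sdiff_subset
        _ ≤ (A.filter fun u => G.Adj u v).card := Finset.card_image_le
    calc (∑ v ∈ B, (F v \ L' v).card) ≤ ∑ v ∈ B, (A.filter fun u => G.Adj u v).card :=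
          Finset.sum_le_sum hstep1
      _ = K := by
          rw [hK, Finset.card_filter, Finset.sum_product, Finset.sum_comm]
          refine Finset.sum_congr rfl (fun v _ => ?_)
          rw [Finset.card_filter]
  have h3 := reqWins_sim G B F (isc G B + K) (isc G B) L' h2 (by omega)
  have h3' := reqWinsP_S_mono (Finset.subset_univ B) h3
  refine reqWinsP_impl h3' ?_
  -- combine the two colorings
  intro L'' hext hcolB
  obtain ⟨φB, hφB1, hφB2⟩ := hcolB
  refine ⟨fun x => if x ∈ A then φA x else φB x, ?_, ?_⟩
  · intro v _
    by_cases hv : v ∈ A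
    · simp only [hv, if_true]
      exact hext v (hφA1 v hv)
    · have hvB : v ∈ B := by
        have := hunion ▸ Finset.mem_univ v
        rcases Finset.mem_union.mp this with h | h
        · exact absurd h hv
        · exact h
      simp only [hv, if_false]
      exact (Finset.mem_sdiff.mp (hφB1 v hvB)).1
  · intro x _ y _ hadj
    have hmemx := hunion ▸ Finset.mem_univ x
    have hmemy := hunion ▸ Finset.mem_univ y
    by_cases hx : x ∈ A <;> by_cases hy : y ∈ A
    · simpa [hx, hy] using hφA2 x hx y hy hadj
    · have hyB : y ∈ B := by
        rcases Finset.mem_union.mp hmemy with h | h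
        · exact absurd h hy
        · exact h
      simp only [hx, hy, if_true, if_false]
      intro he
      have hmemF : φA x ∈ F y :=
        Finset.mem_image_of_mem φA (Finset.mem_filter.mpr ⟨hx, hadj⟩)
      exact (Finset.mem_sdiff.mp (hφB1 y hyB)).2 (he ▸ hmemF)
    · have hxB : x ∈ B := by
        rcases Finset.mem_union.mp hmemx with h | h
        · exact absurd h hx
        · exact h
      simp only [hx, hy, if_true, if_false]
      intro he
      have hmemF : φA y ∈ F x :=
        Finset.mem_image_of_mem φA (Finset.mem_filter.mpr ⟨hy, hadj.symm⟩)
      exact (Finset.mem_sdiff.mp (hφB1 x hxB)).2 (he.symm ▸ hmemF)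
    · have hxB : x ∈ B := by
        rcases Finset.mem_union.mp hmemx with h | h
        · exact absurd h hx
        · exact h
      have hyB : y ∈ B := by
        rcases Finset.mem_union.mp hmemy with h | h
        · exact absurd h hy
        · exact h
      simpa [hx, hy] using hφB2 x hxB y hyB hadj

end Upper

/-- If `(A, B)` is a bipartition of the vertex set of `G`, then
`χ_ISC(G[A]) + χ_ISC(G[B]) ≤ χ_ISC(G) ≤ χ_ISC(G[A]) + χ_ISC(G[B]) + |[A,B]|`. -/
theorem stmt15 (G : SimpleGraph V) (A B : Finset V)
    (hunion : A ∪ B = Finset.univ) (hdisj : Disjoint A B) :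
    isc G A + isc G B ≤ isc G Finset.univ ∧
    isc G Finset.univ ≤
      isc G A + isc G B + {p : V × V | p.1 ∈ A ∧ p.2 ∈ B ∧ G.Adj p.1 p.2}.ncard := by
  have hncard : {p : V × V | p.1 ∈ A ∧ p.2 ∈ B ∧ G.Adj p.1 p.2}.ncard
      = ((A ×ˢ B).filter fun p => G.Adj p.1 p.2).card := by
    have hset : {p : V × V | p.1 ∈ A ∧ p.2 ∈ B ∧ G.Adj p.1 p.2}
        = ↑((A ×ˢ B).filter fun p => G.Adj p.1 p.2) := by
      ext p
      simp [Finset.mem_filter, Finset.mem_product, and_assoc]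
    rw [hset, Set.ncard_coe_finset]
  constructor
  · have hmem : ReqWins G Finset.univ (fun _ => ∅) (isc G Finset.univ) :=
      Nat.sInf_mem (reqWins_nonempty G Finset.univ _)
    exact lower_main G A B hunion hdisj _ _ hmem
  · rw [hncard]
    have := upper_main G A B hunion hdisj
    have hle : isc G Finset.univ ≤
        isc G A + (isc G B + ((A ×ˢ B).filter fun p => G.Adj p.1 p.2).card) :=
      Nat.sInf_le this
    omega
end

section
/- If G is a graph with n vertices whose chromatic number is at most k, then s̊(G) ≤ k·n. -/
variable {V : Type} [Fintype V] [DecidableEq V]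

open Classical in
lemma scost_le_aux (G : SimpleGraph V) (k : ℕ) (C : G.Coloring (Fin k)) :
    ∀ S : Finset V, scost G S ≤ k * S.card := by
  intro S
  induction S using Finset.strongInduction with
  | _ S ih =>
    rw [scost]
    split
    · exact Nat.zero_le _
    · apply Finset.sup_le
      intro M _
      have hM := M.2
      simp only [Finset.mem_erase, Finset.mem_powerset] at hM
      obtain ⟨hMne, hMS⟩ := hM
      have hMne' : M.1.Nonempty := Finset.nonempty_iff_ne_empty.mpr hMne
      obtain ⟨x0, hx0⟩ := hMne'
      -- pick the biggest color class
      obtain ⟨c0, _, hc0⟩ := Finset.exists_max_image Finset.univ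
        (fun c : Fin k => (M.1.filter fun x => C x = c).card) ⟨C x0, Finset.mem_univ _⟩
      set I : Finset V := M.1.filter (fun x => C x = c0) with hIdef
      have hIM : I ⊆ M.1 := Finset.filter_subset _ _
      have hMI : M.1.card ≤ k * I.card := by
        have hsum : M.1.card = ∑ c : Fin k, (M.1.filter fun x => C x = c).card :=
          Finset.card_eq_sum_card_fiberwise (fun x _ => Finset.mem_univ (C x))
        calc M.1.card = ∑ c : Fin k, (M.1.filter fun x => C x = c).card := hsum
          _ ≤ ∑ _c : Fin k, I.card :=
            Finset.sum_le_sum (fun c _ => hc0 c (Finset.mem_univ c))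
          _ = k * I.card := by simp [mul_comm]
      have hIne : I ≠ ∅ := by
        intro h
        rw [h, Finset.card_empty, mul_zero, Nat.le_zero, Finset.card_eq_zero] at hMI
        exact hMne hMI
      have hIind : ∀ x ∈ I, ∀ y ∈ I, ¬ G.Adj x y := by
        intro x hx y hy hadj
        simp only [hIdef, Finset.mem_filter] at hx hy
        exact C.valid hadj (hx.2.trans hy.2.symm)
      have hImem : I ∈ (M.1.powerset.erase ∅).filter
          fun I => ∀ x ∈ I, ∀ y ∈ I, ¬ G.Adj x y := by
        simp only [Finset.mem_filter, Finset.mem_erase, Finset.mem_powerset]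
        exact ⟨⟨hIne, hIM⟩, hIind⟩
      have hIS : I ⊆ S := hIM.trans hMS
      -- the min is at most scost G (S \ I)
      have hmem : scost G (S \ I) ∈
          ((M.1.powerset.erase ∅).filter
            fun I => ∀ x ∈ I, ∀ y ∈ I, ¬ G.Adj x y).attach.image
            fun I => scost G (S \ I.1) :=
        Finset.mem_image.mpr ⟨⟨I, hImem⟩, Finset.mem_attach _ _, rfl⟩
      have hminle := Finset.min_le hmem
      have hunbot : WithBot.unbotD 0
          ((((M.1.powerset.erase ∅).filter
              fun I => ∀ x ∈ I, ∀ y ∈ I, ¬ G.Adj x y).attach.image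
            fun I => scost G (S \ I.1)).min) ≤ scost G (S \ I) := by
        cases h : (((M.1.powerset.erase ∅).filter
              fun I => ∀ x ∈ I, ∀ y ∈ I, ¬ G.Adj x y).attach.image
            fun I => scost G (S \ I.1)).min with
        | top => exact Nat.zero_le _
        | coe m =>
          rw [h] at hminle
          exact (show m ≤ scost G (S \ I) by simpa using hminle)
      have hssub : S \ I ⊂ S :=
        Finset.sdiff_ssubset hIS (Finset.nonempty_iff_ne_empty.mpr hIne)
      have hrec : scost G (S \ I) ≤ k * (S \ I).card := ih _ hssub
      have hcard : (S \ I).card = S.card - I.card := Finset.card_sdiff_of_subset hIS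
      calc M.1.card + _ ≤ k * I.card + k * (S.card - I.card) := by
            rw [hcard] at hrec; exact Nat.add_le_add hMI (hunbot.trans hrec)
        _ = k * S.card := by
            rw [← Nat.mul_add, Nat.add_sub_cancel' (Finset.card_le_card hIS)]

/-- If `G` is a graph with `n` vertices whose chromatic number is at most `k`, then
`s̊(G) ≤ k · n`. -/
theorem stmt19 (G : SimpleGraph V) (k : ℕ)
    (hk : G.chromaticNumber ≤ (k : ℕ∞)) :
    scost G Finset.univ ≤ k * Fintype.card V := by
  obtain ⟨C⟩ := SimpleGraph.chromaticNumber_le_iff_colorable.mp hk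
  have := scost_le_aux G k C Finset.univ
  rwa [Finset.card_univ] at this
end
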